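/- Let $A$ be a normal abelian subgroup of a group $G$ and $g \in G$ a randomly power $k$-Engel element of $A\langle g \rangle$. Then the group $A\langle g \rangle$ is nilpotent of class at most $k+1$. -/

import Mathlib

open scoped commutatorElement

/-- Iterated commutator `[x, y, y, ..., y]` with `y` repeated `k` times (`engel x y 0 = x`). -/
def engel {G : Type*} [Group G] (x y : G) : ℕ → G
  | 0 => x
  | k + 1 => ⁅engel x y k, y⁆

/-- Left-normed iterated commutator `[x, l₁, l₂, ..., lₙ]`. -/
def lcomm {G : Type*} [Group G] (x : G) (l : List G) : G :=
  l.foldl (fun u v => ⁅u, v⁆) x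

/-- `x` is a left Engel element of `G`. -/
def IsLeftEngel (G : Type*) [Group G] (x : G) : Prop :=
  ∀ a : G, ∃ k : ℕ, 0 < k ∧ engel a x k = 1

section Aux

variable {G : Type*} [Group G] {A : Subgroup G}

lemma engel_zero (a g : G) : engel a g 0 = a := rfl

lemma engel_succ (a g : G) (m : ℕ) : engel a g (m + 1) = ⁅engel a g m, g⁆ := rfl

lemma lcomm_nil (x : G) : lcomm x [] = x := rfl

lemma lcomm_cons (x h : G) (t : List G) : lcomm x (h :: t) = lcomm ⁅x, h⁆ t := rfl

lemma comm_mem_right (hA : A.Normal) {a : G} (ha : a ∈ A) (u : G) : ⁅a, u⁆ ∈ A := by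
  have h : ⁅a, u⁆ = a * (u * a⁻¹ * u⁻¹) := by group
  rw [h]
  exact A.mul_mem ha (hA.conj_mem _ (A.inv_mem ha) u)

lemma comm_mem_left (hA : A.Normal) {a : G} (ha : a ∈ A) (u : G) : ⁅u, a⁆ ∈ A := by
  have h : ⁅u, a⁆ = (u * a * u⁻¹) * a⁻¹ := by group
  rw [h]
  exact A.mul_mem (hA.conj_mem _ ha u) (A.inv_mem ha)

lemma comm_one_of_mem_zpowers {e u v : G} (he : ⁅e, u⁆ = 1) (hv : v ∈ Subgroup.zpowers u) :
    ⁅e, v⁆ = 1 := by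
  obtain ⟨n, rfl⟩ := Subgroup.mem_zpowers_iff.mp hv
  have hc : Commute e u := commutatorElement_eq_one_iff_mul_comm.mp he
  exact commutatorElement_eq_one_iff_mul_comm.mpr (hc.zpow_right n)

lemma mem_zpowers_comm {g u v : G} (hu : u ∈ Subgroup.zpowers g) (hv : v ∈ Subgroup.zpowers g) :
    u * v = v * u := by
  obtain ⟨n, rfl⟩ := Subgroup.mem_zpowers_iff.mp hu
  obtain ⟨m, rfl⟩ := Subgroup.mem_zpowers_iff.mp hv
  exact (Commute.refl g).zpow_zpow n m

lemma engel_one (g : G) : ∀ m, engel (1 : G) g m = 1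
  | 0 => rfl
  | m + 1 => by rw [engel_succ, engel_one g m, commutatorElement_one_left]

lemma lcomm_conj (b : G) : ∀ (l : List G) (x : G),
    lcomm (b⁻¹ * x * b) l = b⁻¹ * lcomm x (l.map fun h => b * h * b⁻¹) * b
  | [], x => rfl
  | h :: t, x => by
    rw [List.map_cons, lcomm_cons, lcomm_cons,
      show ⁅b⁻¹ * x * b, h⁆ = b⁻¹ * ⁅x, b * h * b⁻¹⁆ * b by group, lcomm_conj b t]

lemma lcomm_conj_comm {u : G} : ∀ (l : List G), (∀ h ∈ l, u * h = h * u) → ∀ (x : G),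
    lcomm (u * x * u⁻¹) l = u * lcomm x l * u⁻¹
  | [], _, x => rfl
  | h :: t, hc, x => by
    have hh : u * h = h * u := hc h (List.mem_cons_self)
    have e : ⁅u * x * u⁻¹, h⁆ = u * ⁅x, h⁆ * u⁻¹ := by
      have h' : h = u * h * u⁻¹ := by rw [hh]; group
      conv_lhs => rw [h']
      group
    rw [lcomm_cons, lcomm_cons, e,
      lcomm_conj_comm t (fun y hy => hc y (List.mem_cons_of_mem h hy))]

variable (hab : ∀ u ∈ A, ∀ v ∈ A, u * v = v * u)

include hab

lemma comm_mul (hA : A.Normal) {a b : G} (ha : a ∈ A) (hb : b ∈ A) (u : G) :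
    ⁅a * b, u⁆ = ⁅a, u⁆ * ⁅b, u⁆ := by
  have h1 : ⁅a * b, u⁆ = a * (⁅b, u⁆ * (u * a⁻¹ * u⁻¹)) := by group
  have h2 : ⁅a, u⁆ = a * (u * a⁻¹ * u⁻¹) := by group
  rw [h1, hab _ (comm_mem_right hA hb u) _ (hA.conj_mem _ (A.inv_mem ha) u), h2]
  simp [mul_assoc]

lemma comm_inv (hA : A.Normal) {a : G} (ha : a ∈ A) (u : G) : ⁅a⁻¹, u⁆ = ⁅a, u⁆⁻¹ := by
  symm
  rw [inv_eq_iff_mul_eq_one, ← comm_mul hab hA ha (A.inv_mem ha) u, mul_inv_cancel,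
    commutatorElement_one_left]

lemma comm3 {P Q R : G} (hP : P ∈ A) (hQ : Q ∈ A) (hR : R ∈ A) : P * Q * R = R * Q * P := by
  rw [hab P hP Q hQ, mul_assoc, hab P hP R hR, ← mul_assoc, hab Q hQ R hR]

lemma comm_swap (hA : A.Normal) {b : G} (hb : b ∈ A) {c d : G} (hcd : c * d = d * c) :
    ⁅⁅b, c⁆, d⁆ = ⁅⁅b, d⁆, c⁆ := by
  have e1 : ∀ x y : G, ⁅⁅b, x⁆, y⁆
      = b * ((x * b⁻¹ * x⁻¹) * (((y * x) * b * (y * x)⁻¹) * (y * b⁻¹ * y⁻¹))) := by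
    intro x y; group
  rw [e1, e1, hcd]
  have h := comm3 hab (hA.conj_mem _ (A.inv_mem hb) c)
      (hA.conj_mem _ hb (d * c)) (hA.conj_mem _ (A.inv_mem hb) d)
  simp only [mul_assoc] at h ⊢
  rw [h]

lemma engel_mem (hA : A.Normal) {a : G} (ha : a ∈ A) (g : G) : ∀ m, engel a g m ∈ A
  | 0 => ha
  | m + 1 => comm_mem_right hA (engel_mem hA ha g m) g

lemma engel_mul (hA : A.Normal) {a b : G} (ha : a ∈ A) (hb : b ∈ A) (g : G) :
    ∀ m, engel (a * b) g m = engel a g m * engel b g m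
  | 0 => rfl
  | m + 1 => by
    rw [engel_succ, engel_succ, engel_succ, engel_mul hA ha hb g m,
      comm_mul hab hA (engel_mem hab hA ha g m) (engel_mem hab hA hb g m)]

lemma engel_inv (hA : A.Normal) {a : G} (ha : a ∈ A) (g : G) (m : ℕ) :
    engel a⁻¹ g m = (engel a g m)⁻¹ := by
  symm
  rw [inv_eq_iff_mul_eq_one, ← engel_mul hab hA ha (A.inv_mem ha), mul_inv_cancel, engel_one]

lemma engel_comm_swap (hA : A.Normal) {a : G} (ha : a ∈ A) {g u : G} (hu : u * g = g * u) :
    ∀ m, engel ⁅a, u⁆ g m = ⁅engel a g m, u⁆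
  | 0 => rfl
  | m + 1 => by
    rw [engel_succ, engel_comm_swap hA ha hu m,
      comm_swap hab hA (engel_mem hab hA ha g m) hu, engel_succ]

lemma conj_comm_eq (hA : A.Normal) {d b : G} (hd : d ∈ A) (hb : b ∈ A) (h : G) :
    ⁅d, b⁻¹ * h * b⁆ = ⁅d, h⁆ := by
  have e : ⁅d, b⁻¹ * h * b⁆ = b⁻¹ * (⁅b * d * b⁻¹, h⁆ * b) := by group
  have e2 : b * d * b⁻¹ = d := by rw [hab b hb d hd]; group
  rw [e, e2, hab _ (comm_mem_right hA hd h) b hb, inv_mul_cancel_left]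

lemma lcomm_strip (hA : A.Normal) {b : G} (hb : b ∈ A) :
    ∀ (l : List G) {d : G}, d ∈ A →
      lcomm d (l.map fun h => b⁻¹ * h * b) = lcomm d l
  | [], d, _ => rfl
  | h :: t, d, hd => by
    rw [List.map_cons, lcomm_cons, lcomm_cons, conj_comm_eq hab hA hd hb h,
      lcomm_strip hA hb t (comm_mem_right hA hd h)]

lemma comm_absorb (hA : A.Normal) {x a : G} (hx : x ∈ A) (ha : a ∈ A)
    (h : G) : ⁅x, a * h⁆ = ⁅x, h⁆ := by
  have e : ⁅x, a * h⁆ = ⁅x, a⁆ * (a * ⁅x, h⁆ * a⁻¹) := by group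
  rw [e, commutatorElement_eq_one_iff_mul_comm.mpr (hab x hx a ha), one_mul,
    hab a ha _ (comm_mem_right hA hx h), mul_inv_cancel_right]

lemma lemL (hA : A.Normal) (g : G) : ∀ (l : List G) {d : G}, d ∈ A →
    (∀ h ∈ l, Subgroup.zpowers h = Subgroup.zpowers g) →
    lcomm d l = 1 → engel d g l.length = 1
  | [], d, _, _, h1 => h1
  | h :: t, d, hd, hz, h1 => by
    have hzh : Subgroup.zpowers h = Subgroup.zpowers g := hz h (List.mem_cons_self)
    have hgh : h * g = g * h :=
      mem_zpowers_comm (Subgroup.mem_zpowers h) (hzh ▸ Subgroup.mem_zpowers g)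
    have ht : engel ⁅d, h⁆ g t.length = 1 :=
      lemL hA g t (comm_mem_right hA hd h)
        (fun y hy => hz y (List.mem_cons_of_mem h hy)) h1
    rw [engel_comm_swap hab hA hd hgh] at ht
    have h2 : ⁅engel d g t.length, g⁆ = 1 :=
      comm_one_of_mem_zpowers ht (hzh ▸ Subgroup.mem_zpowers g)
    simpa [List.length_cons, engel_succ] using h2

lemma main2 (hA : A.Normal) (g : G) {b : G} (hb : b ∈ A) (g₁ : G) (gs : List G)
    (hgen : ∀ gi ∈ g₁ :: gs, Subgroup.zpowers gi = Subgroup.zpowers g)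
    (hl : lcomm g₁ (gs.map fun h => b⁻¹ * h * b) = 1) :
    engel b g (gs.length + 1) = 1 := by
  have hz1 : Subgroup.zpowers g₁ = Subgroup.zpowers g := hgen g₁ (List.mem_cons_self)
  cases gs with
  | nil =>
    have hg1 : g₁ = 1 := hl
    have hg : g = 1 := Subgroup.zpowers_eq_bot.mp (by
      rw [← hz1, hg1, Subgroup.zpowers_eq_bot])
    rw [hg]
    simpa [engel_succ] using commutatorElement_one_right (engel b 1 0)
  | cons h t =>
    have hzh : Subgroup.zpowers h = Subgroup.zpowers g :=
      hgen h (List.mem_cons_of_mem g₁ (List.mem_cons_self))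
    have hg1h : g₁ * h = h * g₁ :=
      mem_zpowers_comm (Subgroup.mem_zpowers g₁)
        (by rw [hz1, ← hzh]; exact Subgroup.mem_zpowers h)
    have hgh : h * g = g * h :=
      mem_zpowers_comm (Subgroup.mem_zpowers h) (hzh ▸ Subgroup.mem_zpowers g)
    have hcommhg : Commute h g := hgh
    have hghinv : h⁻¹ * g = g * h⁻¹ := hcommhg.inv_left
    have hgg1 : g₁ * g = g * g₁ :=
      mem_zpowers_comm (Subgroup.mem_zpowers g₁) (hz1 ▸ Subgroup.mem_zpowers g)
    set c : G := ⁅h⁻¹, b⁻¹⁆ with hc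
    have hcA : c ∈ A := comm_mem_left hA (A.inv_mem hb) h⁻¹
    set u : G := ⁅g₁, c⁆ with hu
    have huA : u ∈ A := comm_mem_left hA hcA g₁
    have key : ⁅g₁, b⁻¹ * h * b⁆ = h * u * h⁻¹ := by
      have e1 : b⁻¹ * h * b = h * c := by rw [hc]; group
      rw [e1, commutatorElement_def, show g₁ * (h * c) = h * (g₁ * c) by
        rw [← mul_assoc, hg1h, mul_assoc], hu, commutatorElement_def]
      group
    have hl3 : lcomm (h * u * h⁻¹) t = 1 := by
      rw [List.map_cons, lcomm_cons, key,
        lcomm_strip hab hA hb t (hA.conj_mem _ huA h)] at hl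
      exact hl
    have hl4 : lcomm u t = 1 := by
      have hcm : ∀ y ∈ t, h * y = y * h := fun y hy =>
        mem_zpowers_comm (Subgroup.mem_zpowers h)
          (by rw [hzh, ← hgen y (List.mem_cons_of_mem g₁ (List.mem_cons_of_mem h hy))]
              exact Subgroup.mem_zpowers y)
      rw [lcomm_conj_comm t hcm u] at hl3
      have h4 := congrArg (fun z => h⁻¹ * z * h) hl3
      simpa [mul_assoc] using h4
    have hEu : engel u g t.length = 1 :=
      lemL hab hA g t huA
        (fun y hy => hgen y (List.mem_cons_of_mem g₁ (List.mem_cons_of_mem h hy))) hl4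
    have hEc1 : ⁅engel c g t.length, g₁⁆ = 1 := by
      have h5 : engel ⁅c, g₁⁆ g t.length = 1 := by
        rw [hu, ← commutatorElement_inv, engel_inv hab hA (comm_mem_right hA hcA g₁) g,
          inv_eq_one] at hEu
        exact hEu
      rw [engel_comm_swap hab hA hcA hgg1] at h5
      exact h5
    have hEc : engel c g (t.length + 1) = 1 := by
      rw [engel_succ]
      exact comm_one_of_mem_zpowers hEc1 (hz1 ▸ Subgroup.mem_zpowers g)
    have hEb1 : ⁅engel b g (t.length + 1), h⁻¹⁆ = 1 := by
      rw [hc, ← commutatorElement_inv,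
        engel_inv hab hA (comm_mem_right hA (A.inv_mem hb) h⁻¹) g, inv_eq_one,
        engel_comm_swap hab hA (A.inv_mem hb) hghinv,
        engel_inv hab hA hb, comm_inv hab hA (engel_mem hab hA hb g _), inv_eq_one] at hEc
      exact hEc
    have hfin : ⁅engel b g (t.length + 1), g⁆ = 1 :=
      comm_one_of_mem_zpowers hEb1
        (by rw [Subgroup.zpowers_inv, hzh]; exact Subgroup.mem_zpowers g)
    simpa [List.length_cons, engel_succ] using hfin

lemma mainA (hA : A.Normal) (g : G) (k : ℕ)
    (hrand : ∀ x ∈ A ⊔ Subgroup.zpowers g, ∃ (g₁ : G) (gs : List G),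
      (g₁ :: gs).length = k ∧
      (∀ gi ∈ g₁ :: gs, Subgroup.zpowers gi = Subgroup.zpowers g) ∧
      (lcomm (x⁻¹ * g₁ * x) gs = 1 ∨
        lcomm g₁ (gs.map (fun gi => x⁻¹ * gi * x)) = 1))
    {a : G} (ha : a ∈ A) : engel a g k = 1 := by
  obtain ⟨g₁, gs, hlen, hgen, hcase⟩ := hrand a (Subgroup.mem_sup_left ha)
  have hlen' : gs.length + 1 = k := by simpa using hlen
  rcases hcase with h1 | h2
  · rw [lcomm_conj a gs (g₁)] at h1
    have h1' : lcomm g₁ (gs.map fun h => a * h * a⁻¹) = 1 := by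
      have := congrArg (fun z => a * z * a⁻¹) h1
      simpa [mul_assoc] using this
    have h1'' : lcomm g₁ (gs.map fun h => (a⁻¹)⁻¹ * h * a⁻¹) = 1 := by
      simpa [inv_inv] using h1'
    have := main2 hab hA g (A.inv_mem ha) g₁ gs hgen h1''
    rw [engel_inv hab hA ha, inv_eq_one, hlen'] at this
    exact this
  · have := main2 hab hA g ha g₁ gs hgen h2
    rwa [hlen'] at this

end Aux

section Series

variable {G : Type*} [Group G]

/-- The subgroup of `K` of elements of `A` whose `m`-fold Engel commutator with `g` vanishes. -/
def engelSub (A : Subgroup G) (hA : A.Normal) (hab : ∀ u ∈ A, ∀ v ∈ A, u * v = v * u)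
    (g : G) (m : ℕ) (K : Subgroup G) : Subgroup ↥K where
  carrier := {x : ↥K | (x : G) ∈ A ∧ engel (x : G) g m = 1}
  one_mem' := ⟨A.one_mem, by rw [Subgroup.coe_one, engel_one]⟩
  mul_mem' := by
    rintro x y ⟨hx1, hx2⟩ ⟨hy1, hy2⟩
    refine ⟨by simpa using A.mul_mem hx1 hy1, ?_⟩
    rw [Subgroup.coe_mul, engel_mul hab hA hx1 hy1, hx2, hy2, one_mul]
  inv_mem' := by
    rintro x ⟨hx1, hx2⟩
    refine ⟨by simpa using A.inv_mem hx1, ?_⟩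
    rw [Subgroup.coe_inv, engel_inv hab hA hx1, hx2, inv_one]

end Series

open scoped Pointwise
theorem stmt_5 {G : Type*} [Group G] (A : Subgroup G) (hA : A.Normal)
    (hab : ∀ u ∈ A, ∀ v ∈ A, u * v = v * u)
    (g : G) (k : ℕ) (hk : 0 < k)
    (hrand : ∀ x ∈ A ⊔ Subgroup.zpowers g, ∃ (g₁ : G) (gs : List G),
      (g₁ :: gs).length = k ∧
      (∀ gi ∈ g₁ :: gs, Subgroup.zpowers gi = Subgroup.zpowers g) ∧
      (lcomm (x⁻¹ * g₁ * x) gs = 1 ∨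
        lcomm g₁ (gs.map (fun gi => x⁻¹ * gi * x)) = 1)) :
    (⊤ : Subgroup ↥(A ⊔ Subgroup.zpowers g)).lowerCentralSeries (k + 1) = ⊥ := by
  haveI := hA
  set K : Subgroup G := A ⊔ Subgroup.zpowers g with hK
  -- decomposition of elements of K
  have memK : ∀ y ∈ K, ∃ a ∈ A, ∃ n : ℤ, y = a * g ^ n := by
    intro y hy
    have h1 : y ∈ (A : Set G) * (Subgroup.zpowers g : Set G) := by
      rw [← Subgroup.normal_mul]; exact hy
    obtain ⟨a, ha, h, hh, rfl⟩ := Set.mem_mul.mp h1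
    obtain ⟨n, rfl⟩ := Subgroup.mem_zpowers_iff.mp hh
    exact ⟨a, ha, n, rfl⟩
  -- commutators of elements of K lie in A
  have commK : ∀ x ∈ K, ∀ y ∈ K, ⁅x, y⁆ ∈ A := by
    intro x hx y hy
    set π := QuotientGroup.mk' A with hπ
    have hker : π.ker = A := QuotientGroup.ker_mk' A
    have himg : ∀ z ∈ K, π z ∈ Subgroup.zpowers (π g) := by
      intro z hz
      have hmap : K.map π = Subgroup.zpowers (π g) := by
        rw [hK, Subgroup.map_sup, MonoidHom.map_zpowers,
          (Subgroup.map_eq_bot_iff _).mpr (le_of_eq hker.symm), bot_sup_eq]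
      rw [← hmap]
      exact Subgroup.mem_map_of_mem π hz
    have hone : π ⁅x, y⁆ = 1 := by
      rw [map_commutatorElement]
      exact commutatorElement_eq_one_iff_mul_comm.mpr
        (mem_zpowers_comm (himg x hx) (himg y hy))
    rw [← hker]
    exact MonoidHom.mem_ker.mpr hone
  -- the descending central series
  set H : ℕ → Subgroup ↥K := fun n =>
    Nat.casesOn n ⊤ (fun j => engelSub A hA hab g (k - j) K) with hH
  have hdesc : IsDescendingCentralSeries H := by
    refine ⟨rfl, ?_⟩
    intro x n hx q
    have hcomm : (x * q * x⁻¹ * q⁻¹ : ↥K) = ⁅x, q⁆ := rfl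
    have hcoe : ((⁅x, q⁆ : ↥K) : G) = ⁅(x : G), (q : G)⁆ := rfl
    cases n with
    | zero =>
      refine ⟨by rw [hcoe]; exact commK x x.2 q q.2, ?_⟩
      rw [hcoe]
      simp only [Nat.sub_zero]
      exact mainA hab hA g k hrand (commK x x.2 q q.2)
    | succ j =>
      obtain ⟨hx1, hx2⟩ := hx
      refine ⟨by rw [hcoe]; exact comm_mem_right hA hx1 (q : G), ?_⟩
      rw [hcoe]
      obtain ⟨b, hb, n, hq⟩ := memK (q : G) q.2
      rw [hq, comm_absorb hab hA hx1 hb]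
      rcases Nat.eq_zero_or_pos (k - j) with h0 | hpos
      · have hx3 : (x : G) = 1 := by rw [h0] at hx2; exact hx2
        rw [hx3, commutatorElement_one_left, engel_one]
      · obtain ⟨m', hm'⟩ : ∃ m', k - j = m' + 1 :=
          ⟨k - j - 1, by omega⟩
        have hkj : k - (j + 1) = m' := by omega
        rw [hkj]
        have hgn : g ^ n * g = g * g ^ n :=
          mem_zpowers_comm (Subgroup.zpow_mem_zpowers g n) (Subgroup.mem_zpowers g)
        rw [engel_comm_swap hab hA hx1 hgn]
        have hx4 : ⁅engel (x : G) g m', g⁆ = 1 := by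
          rw [← engel_succ, ← hm']; exact hx2
        exact comm_one_of_mem_zpowers hx4 (Subgroup.zpow_mem_zpowers g n)
  have hle := descending_central_series_ge_lower H hdesc (k + 1)
  have hbot : H (k + 1) ≤ ⊥ := by
    intro x hx
    obtain ⟨hx1, hx2⟩ := hx
    rw [Nat.sub_self] at hx2
    have : (x : G) = 1 := hx2
    simpa [Subgroup.mem_bot] using Subtype.ext this
  exact le_bot_iff.mp (le_trans hle hbot)
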